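/- Let (φ_{i,n}) be positive real weights (integers n ≥ 1, 1 ≤ i ≤ n) such that (Σ_{i=1}^{n} φ_{i,n}²)/(Σ_{i=1}^{n} φ_{i,n})² → 0 as n → ∞. On a probability space, for each n let U_{1,n}, …, U_{n,n} be independent integrable real random variables such that the family {U_{i,n}} is uniformly integrable relative to the weights {φ_{i,n}}. Then (Σ_{i=1}^{n} (U_{i,n} − E[U_{i,n}]))/(Σ_{i=1}^{n} φ_{i,n}) converges to 0 in probability as n → ∞. -/

import Mathlib

open MeasureTheory Real Filter Topology ProbabilityTheory

lemma aux_int_abs_le_sqrt {Ω : Type*} [MeasurableSpace Ω] (P : Measure Ω)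
    [IsProbabilityMeasure P] {Y : Ω → ℝ} (hY : MemLp Y 2 P) :
    ∫ ω, |Y ω| ∂P ≤ Real.sqrt (∫ ω, (Y ω)^2 ∂P) := by
  have habs : MemLp (fun ω => |Y ω|) 2 P := hY.abs
  have h := variance_nonneg (fun ω => |Y ω|) P
  rw [variance_eq_sub habs] at h
  have h2 : (∫ ω, |Y ω| ∂P)^2 ≤ ∫ ω, (Y ω)^2 ∂P := by
    have he : (fun ω => |Y ω|)^2 = fun ω => (Y ω)^2 := by
      funext ω; simp [sq_abs]
    rw [he] at h
    linarith
  exact Real.le_sqrt_of_sq_le h2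

theorem stmt_9
    (φ : ℕ → ℕ → ℝ)
    (hφpos : ∀ n : ℕ, ∀ i : ℕ, 1 ≤ i → i ≤ n → 0 < φ i n)
    (hratio : Tendsto (fun n : ℕ =>
        (∑ i ∈ Finset.Icc 1 n, (φ i n)^2) / (∑ i ∈ Finset.Icc 1 n, φ i n)^2)
      atTop (𝓝 0))
    {Ω : Type*} [MeasurableSpace Ω] (P : Measure Ω) [IsProbabilityMeasure P]
    (U : ℕ → ℕ → Ω → ℝ)
    (hmeas : ∀ i n, Measurable (U i n))
    (hint : ∀ n : ℕ, ∀ i : ℕ, 1 ≤ i → i ≤ n → Integrable (U i n) P)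
    (hindep : ∀ n : ℕ,
      iIndepFun
        (fun i : Fin n => U (i.1 + 1) n) P)
    (hUI : ∀ ε : ℝ, 0 < ε → ∃ N : ℝ, 0 < N ∧ ∀ n : ℕ, ∀ i : ℕ, 1 ≤ i → i ≤ n →
      ∫ ω in {ω | N * φ i n < |U i n ω|}, |U i n ω| ∂P ≤ ε * φ i n) :
    TendstoInMeasure P
      (fun n ω => (∑ i ∈ Finset.Icc 1 n, (U i n ω - ∫ ω', U i n ω' ∂P))
        / (∑ i ∈ Finset.Icc 1 n, φ i n))
      atTop (fun _ => (0 : ℝ)) := by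
  set T : ℕ → Ω → ℝ := fun n ω =>
    (∑ i ∈ Finset.Icc 1 n, (U i n ω - ∫ ω', U i n ω' ∂P)) / (∑ i ∈ Finset.Icc 1 n, φ i n)
    with hT
  have hTmeas : ∀ n, Measurable (T n) := by
    intro n
    exact (Finset.measurable_sum _ fun i _ => (hmeas i n).sub measurable_const).div_const _
  have hTint : ∀ n, Integrable (T n) P := by
    intro n
    refine (integrable_finset_sum _ fun i hi => ?_).div_const _
    obtain ⟨h1, h2⟩ := Finset.mem_Icc.1 hi
    exact (hint n i h1 h2).sub (integrable_const _)
  -- main real convergence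
  have hmain : Tendsto (fun n => ∫ ω, |T n ω| ∂P) atTop (𝓝 0) := by
    rw [NormedAddCommGroup.tendsto_nhds_zero]
    intro δ hδ
    obtain ⟨N, hNpos, hN⟩ := hUI (δ/8) (by positivity)
    set C : ℝ := N * (N + δ/8) with hCdef
    have hCpos : 0 < C := by positivity
    have hev1 := hratio.eventually_lt_const (show (0:ℝ) < (δ/2)^2 / C by positivity)
    filter_upwards [hev1, eventually_ge_atTop 1] with n hn hn1
    set S := ∑ i ∈ Finset.Icc 1 n, φ i n with hSdef
    set Q := ∑ i ∈ Finset.Icc 1 n, (φ i n)^2 with hQdef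
    have hSpos : 0 < S := Finset.sum_pos
      (fun i hi => hφpos n i (Finset.mem_Icc.1 hi).1 (Finset.mem_Icc.1 hi).2)
      ⟨1, Finset.mem_Icc.2 ⟨le_refl 1, hn1⟩⟩
    have hQnonneg : 0 ≤ Q := Finset.sum_nonneg fun i _ => sq_nonneg _
    set V : ℕ → Ω → ℝ := fun i ω => if N * φ i n < |U i n ω| then 0 else U i n ω with hVdef
    set W : ℕ → Ω → ℝ := fun i ω => if N * φ i n < |U i n ω| then U i n ω else 0 with hWdef
    have hUVW : ∀ i ω, U i n ω = V i ω + W i ω := by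
      intro i ω; by_cases h : N * φ i n < |U i n ω| <;> simp [hVdef, hWdef, h]
    have hVmeas : ∀ i, Measurable (V i) := fun i =>
      Measurable.ite (measurableSet_lt measurable_const (hmeas i n).abs)
        measurable_const (hmeas i n)
    have hAmeas : ∀ i, MeasurableSet {ω | N * φ i n < |U i n ω|} :=
      fun i => measurableSet_lt measurable_const (hmeas i n).abs
    have hφi : ∀ i, 1 ≤ i → i ≤ n → 0 < φ i n := fun i h1 h2 => hφpos n i h1 h2
    have hVbdd : ∀ i, 1 ≤ i → i ≤ n → ∀ ω, |V i ω| ≤ N * φ i n := by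
      intro i h1 h2 ω
      have hNφ : 0 ≤ N * φ i n := mul_nonneg hNpos.le (hφi i h1 h2).le
      by_cases h : N * φ i n < |U i n ω|
      · simpa [hVdef, h] using hNφ
      · simpa [hVdef, h] using not_lt.1 h
    have hV2 : ∀ i, 1 ≤ i → i ≤ n → MemLp (V i) 2 P := fun i h1 h2 =>
      (memLp_top_of_bound (hVmeas i).aestronglyMeasurable _
        (ae_of_all _ fun ω => by
          rw [Real.norm_eq_abs]; exact hVbdd i h1 h2 ω)).mono_exponent le_top
    have hVint : ∀ i, 1 ≤ i → i ≤ n → Integrable (V i) P := fun i h1 h2 =>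
      (hV2 i h1 h2).integrable one_le_two
    have hWint : ∀ i, 1 ≤ i → i ≤ n → Integrable (W i) P := by
      intro i h1 h2
      have hWe : W i = fun ω => U i n ω - V i ω := by
        funext ω; rw [hUVW i ω]; ring
      rw [hWe]; exact (hint n i h1 h2).sub (hVint i h1 h2)
    have hWabs : ∀ i, 1 ≤ i → i ≤ n → ∫ ω, |W i ω| ∂P ≤ δ/8 * φ i n := by
      intro i h1 h2
      have heq : (fun ω => |W i ω|)
          = Set.indicator {ω | N * φ i n < |U i n ω|} (fun ω => |U i n ω|) := by
        funext ω
        simp only [Set.indicator, Set.mem_setOf_eq]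
        by_cases h : N * φ i n < |U i n ω| <;> simp [hWdef, h]
      calc ∫ ω, |W i ω| ∂P = ∫ ω in {ω | N * φ i n < |U i n ω|}, |U i n ω| ∂P := by
            rw [heq, integral_indicator (hAmeas i)]
        _ ≤ δ/8 * φ i n := hN n i h1 h2
    have hUabs : ∀ i, 1 ≤ i → i ≤ n → ∫ ω, |U i n ω| ∂P ≤ (N + δ/8) * φ i n := by
      intro i h1 h2
      have hNφ : 0 ≤ N * φ i n := mul_nonneg hNpos.le (hφi i h1 h2).le
      have hpt : ∀ ω, |U i n ω| ≤ N * φ i n + |W i ω| := by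
        intro ω
        by_cases h : N * φ i n < |U i n ω|
        · simp only [hWdef]; rw [if_pos h]; linarith
        · simp only [hWdef]; rw [if_neg h]; simpa using not_lt.1 h
      calc ∫ ω, |U i n ω| ∂P ≤ ∫ ω, (N * φ i n + |W i ω|) ∂P :=
            integral_mono (hint n i h1 h2).abs
              ((integrable_const _).add (hWint i h1 h2).abs) hpt
        _ = N * φ i n + ∫ ω, |W i ω| ∂P := by
            rw [integral_add (integrable_const _) (hWint i h1 h2).abs, integral_const]
            simp
        _ ≤ N * φ i n + δ/8 * φ i n := by linarith [hWabs i h1 h2]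
        _ = (N + δ/8) * φ i n := by ring
    have hVar : ∀ i, 1 ≤ i → i ≤ n → variance (V i) P ≤ C * (φ i n)^2 := by
      intro i h1 h2
      have hNφ : 0 ≤ N * φ i n := mul_nonneg hNpos.le (hφi i h1 h2).le
      have h0 := variance_le_expectation_sq (μ := P) (hVmeas i).aestronglyMeasurable
      have hid : P[(V i)^2] = ∫ ω, (V i ω)^2 ∂P := rfl
      rw [hid] at h0
      have hsq : ∫ ω, (V i ω)^2 ∂P ≤ N * φ i n * ((N + δ/8) * φ i n) := by
        have hpt : ∀ ω, (V i ω)^2 ≤ N * φ i n * |U i n ω| := by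
          intro ω
          have hb := hVbdd i h1 h2 ω
          have hle : |V i ω| ≤ |U i n ω| := by
            by_cases h : N * φ i n < |U i n ω| <;> simp [hVdef, h]
          nlinarith [abs_nonneg (V i ω), sq_abs (V i ω)]
        calc ∫ ω, (V i ω)^2 ∂P ≤ ∫ ω, N * φ i n * |U i n ω| ∂P :=
              integral_mono (hV2 i h1 h2).integrable_sq
                (((hint n i h1 h2).abs).const_mul _) hpt
          _ = N * φ i n * ∫ ω, |U i n ω| ∂P := integral_const_mul _ _
          _ ≤ N * φ i n * ((N + δ/8) * φ i n) :=
              mul_le_mul_of_nonneg_left (hUabs i h1 h2) hNφ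
      calc variance (V i) P ≤ N * φ i n * ((N + δ/8) * φ i n) := le_trans h0 hsq
        _ = C * (φ i n)^2 := by rw [hCdef]; ring
    -- reindexing
    have hsum : ∀ (f : ℕ → ℝ), ∑ i ∈ Finset.Icc 1 n, f i = ∑ j : Fin n, f (j.1 + 1) := by
      intro f
      rw [Fin.sum_univ_eq_sum_range (fun j => f (j + 1)), ← Finset.Ico_add_one_right_eq_Icc,
        Finset.sum_Ico_eq_sum_range]
      refine Finset.sum_congr (by simp) fun j _ => by rw [add_comm]
    have hj1 : ∀ j : Fin n, 1 ≤ j.1 + 1 := fun j => Nat.le_add_left 1 j.1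
    have hj2 : ∀ j : Fin n, j.1 + 1 ≤ n := fun j => j.2
    -- independence of truncations
    have gmeas : ∀ (c : ℝ), Measurable (fun x : ℝ => if c < |x| then (0:ℝ) else x) :=
      fun c => Measurable.ite (measurableSet_lt measurable_const measurable_abs)
        measurable_const measurable_id
    have hindepV : ∀ (j k : Fin n), j ≠ k → IndepFun (V (j.1+1)) (V (k.1+1)) P := by
      intro j k hjk
      have h := (hindep n).indepFun hjk
      exact h.comp (gmeas (N * φ (j.1+1) n)) (gmeas (N * φ (k.1+1) n))
    have hX2 : ∀ j : Fin n, MemLp (V (j.1+1)) 2 P := fun j => hV2 _ (hj1 j) (hj2 j)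
    have hvarsum : variance (∑ j : Fin n, V (j.1+1)) P = ∑ j : Fin n, variance (V (j.1+1)) P :=
      IndepFun.variance_sum (fun j _ => hX2 j) (fun j _ k _ hjk => hindepV j k hjk)
    set SV : Ω → ℝ := ∑ j : Fin n, V (j.1+1) with hSVdef
    have hSVapp : ∀ ω, SV ω = ∑ j : Fin n, V (j.1+1) ω := by
      intro ω; rw [hSVdef]; exact Finset.sum_apply _ _ _
    have hSV2 : MemLp SV 2 P := memLp_finset_sum' _ fun j _ => hX2 j
    have hSVint : Integrable SV P := hSV2.integrable one_le_two
    -- bound 1 : truncated part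
    have hZ2 : MemLp (SV - fun _ => ∫ ω', SV ω' ∂P) 2 P := hSV2.sub (memLp_const _)
    have hbound1 : ∫ ω, |SV ω - ∫ ω', SV ω' ∂P| ∂P ≤ Real.sqrt (C * Q) := by
      have h1 := aux_int_abs_le_sqrt P hZ2
      simp only [Pi.sub_apply] at h1
      have h2 : ∫ ω, (SV ω - ∫ ω', SV ω' ∂P)^2 ∂P = variance SV P := by
        exact (variance_eq_integral hSV2.aemeasurable).symm
      have h3 : variance SV P ≤ C * Q := by
        rw [hSVdef, hvarsum]
        calc ∑ j : Fin n, variance (V (j.1+1)) P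
            ≤ ∑ j : Fin n, C * (φ (j.1+1) n)^2 :=
              Finset.sum_le_sum fun j _ => hVar _ (hj1 j) (hj2 j)
          _ = C * Q := by
              rw [hQdef, hsum (fun i => (φ i n)^2), ← Finset.mul_sum]
      refine le_trans h1 ?_
      rw [h2]
      exact Real.sqrt_le_sqrt h3
    -- bound 2 : tail part
    have hWj : ∀ j : Fin n, Integrable (W (j.1+1)) P := fun j => hWint _ (hj1 j) (hj2 j)
    have hterm : ∀ j : Fin n,
        ∫ ω, |W (j.1+1) ω - ∫ ω', W (j.1+1) ω' ∂P| ∂P ≤ δ/4 * φ (j.1+1) n := by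
      intro j
      have hWa := hWabs _ (hj1 j) (hj2 j)
      have habsint : |∫ ω', W (j.1+1) ω' ∂P| ≤ ∫ ω', |W (j.1+1) ω'| ∂P := by
        simpa [Real.norm_eq_abs] using norm_integral_le_integral_norm (μ := P) (W (j.1+1))
      calc ∫ ω, |W (j.1+1) ω - ∫ ω', W (j.1+1) ω' ∂P| ∂P
          ≤ ∫ ω, (|W (j.1+1) ω| + |∫ ω', W (j.1+1) ω' ∂P|) ∂P :=
            integral_mono ((hWj j).sub (integrable_const _)).abs
              ((hWj j).abs.add (integrable_const _)) (fun ω => abs_sub _ _)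
        _ = (∫ ω, |W (j.1+1) ω| ∂P) + |∫ ω', W (j.1+1) ω' ∂P| := by
            rw [integral_add (hWj j).abs (integrable_const _), integral_const]; simp
        _ ≤ δ/4 * φ (j.1+1) n := by linarith
    have hbound2 : ∫ ω, |∑ j : Fin n, (W (j.1+1) ω - ∫ ω', W (j.1+1) ω' ∂P)| ∂P
        ≤ δ/4 * S := by
      calc ∫ ω, |∑ j : Fin n, (W (j.1+1) ω - ∫ ω', W (j.1+1) ω' ∂P)| ∂P
          ≤ ∫ ω, ∑ j : Fin n, |W (j.1+1) ω - ∫ ω', W (j.1+1) ω' ∂P| ∂P :=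
            integral_mono (integrable_finset_sum _ fun j _ =>
                (hWj j).sub (integrable_const _)).abs
              (integrable_finset_sum _ fun j _ =>
                ((hWj j).sub (integrable_const _)).abs)
              (fun ω => Finset.abs_sum_le_sum_abs _ _)
        _ = ∑ j : Fin n, ∫ ω, |W (j.1+1) ω - ∫ ω', W (j.1+1) ω' ∂P| ∂P :=
            integral_finset_sum _ fun j _ => ((hWj j).sub (integrable_const _)).abs
        _ ≤ ∑ j : Fin n, δ/4 * φ (j.1+1) n := Finset.sum_le_sum fun j _ => hterm j
        _ = δ/4 * S := by rw [hSdef, hsum (fun i => φ i n), ← Finset.mul_sum]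
    -- decomposition of the numerator
    have hdecomp : ∀ ω, ∑ i ∈ Finset.Icc 1 n, (U i n ω - ∫ ω', U i n ω' ∂P)
        = (SV ω - ∫ ω', SV ω' ∂P)
          + ∑ j : Fin n, (W (j.1+1) ω - ∫ ω', W (j.1+1) ω' ∂P) := by
      intro ω
      have hSVi : ∫ ω', SV ω' ∂P = ∑ j : Fin n, ∫ ω', V (j.1+1) ω' ∂P := by
        rw [show SV = fun ω' => ∑ j : Fin n, V (j.1+1) ω' from funext hSVapp]
        exact integral_finset_sum _ fun j _ => hVint _ (hj1 j) (hj2 j)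
      rw [hsum (fun i => U i n ω - ∫ ω', U i n ω' ∂P), hSVapp ω, hSVi,
        ← Finset.sum_sub_distrib, ← Finset.sum_add_distrib]
      refine Finset.sum_congr rfl fun j _ => ?_
      have hiU : ∫ ω', U (j.1+1) n ω' ∂P
          = (∫ ω', V (j.1+1) ω' ∂P) + ∫ ω', W (j.1+1) ω' ∂P := by
        rw [show U (j.1+1) n = fun ω' => V (j.1+1) ω' + W (j.1+1) ω' from funext (hUVW _)]
        exact integral_add (hVint _ (hj1 j) (hj2 j)) (hWint _ (hj1 j) (hj2 j))
      rw [hUVW (j.1+1) ω, hiU]; ring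
    -- numerator bound
    have hnumint : Integrable (fun ω => ∑ i ∈ Finset.Icc 1 n,
        (U i n ω - ∫ ω', U i n ω' ∂P)) P := by
      refine integrable_finset_sum _ fun i hi => ?_
      obtain ⟨hi1, hi2⟩ := Finset.mem_Icc.1 hi
      exact (hint n i hi1 hi2).sub (integrable_const _)
    have hnum : ∫ ω, |∑ i ∈ Finset.Icc 1 n, (U i n ω - ∫ ω', U i n ω' ∂P)| ∂P
        ≤ Real.sqrt (C * Q) + δ/4 * S := by
      have hZint : Integrable (fun ω => |SV ω - ∫ ω', SV ω' ∂P|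
          + |∑ j : Fin n, (W (j.1+1) ω - ∫ ω', W (j.1+1) ω' ∂P)|) P :=
        (hSVint.sub (integrable_const _)).abs.add
          (integrable_finset_sum _ fun j _ => (hWj j).sub (integrable_const _)).abs
      calc ∫ ω, |∑ i ∈ Finset.Icc 1 n, (U i n ω - ∫ ω', U i n ω' ∂P)| ∂P
          ≤ ∫ ω, (|SV ω - ∫ ω', SV ω' ∂P|
              + |∑ j : Fin n, (W (j.1+1) ω - ∫ ω', W (j.1+1) ω' ∂P)|) ∂P := by
            refine integral_mono hnumint.abs hZint (fun ω => ?_)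
            rw [hdecomp ω]; exact abs_add_le _ _
        _ = (∫ ω, |SV ω - ∫ ω', SV ω' ∂P| ∂P)
            + ∫ ω, |∑ j : Fin n, (W (j.1+1) ω - ∫ ω', W (j.1+1) ω' ∂P)| ∂P :=
            integral_add (hSVint.sub (integrable_const _)).abs
              (integrable_finset_sum _ fun j _ => (hWj j).sub (integrable_const _)).abs
        _ ≤ Real.sqrt (C * Q) + δ/4 * S := add_le_add hbound1 hbound2
    -- final computation
    have hTn : ∫ ω, |T n ω| ∂P
        = (∫ ω, |∑ i ∈ Finset.Icc 1 n, (U i n ω - ∫ ω', U i n ω' ∂P)| ∂P) / S := by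
      rw [← integral_div]
      refine integral_congr_ae (ae_of_all _ fun ω => ?_)
      simp only [hT]
      rw [abs_div, abs_of_pos hSpos]
    have hsqrt : Real.sqrt (C * Q) / S < δ/2 := by
      have h1 : Real.sqrt (C * Q) / S = Real.sqrt (C * Q / S^2) := by
        rw [Real.sqrt_div (mul_nonneg hCpos.le hQnonneg), Real.sqrt_sq hSpos.le]
      rw [h1]
      have h2 : C * Q / S^2 < (δ/2)^2 := by
        have := (mul_lt_mul_iff_right₀ hCpos).2 hn
        rw [mul_div_assoc]
        calc C * (Q / S^2) < C * ((δ/2)^2 / C) := this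
          _ = (δ/2)^2 := by field_simp
      exact (Real.sqrt_lt' (by positivity)).2 h2
    rw [Real.norm_eq_abs, abs_of_nonneg (integral_nonneg fun ω => abs_nonneg _), hTn]
    calc (∫ ω, |∑ i ∈ Finset.Icc 1 n, (U i n ω - ∫ ω', U i n ω' ∂P)| ∂P) / S
        ≤ (Real.sqrt (C * Q) + δ/4 * S) / S := by gcongr
      _ = Real.sqrt (C * Q) / S + δ/4 := by
          rw [add_div, mul_div_assoc, div_self hSpos.ne']; ring
      _ < δ/2 + δ/4 := by linarith
      _ < δ := by linarith
  refine tendstoInMeasure_of_tendsto_eLpNorm (p := 1) one_ne_zero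
    (fun n => (hTmeas n).aestronglyMeasurable) aestronglyMeasurable_const ?_
  have heq : (fun n => eLpNorm (T n - fun _ => (0:ℝ)) 1 P)
      = fun n => ENNReal.ofReal (∫ ω, |T n ω| ∂P) := by
    funext n
    have h0 : (T n - fun _ => (0:ℝ)) = T n := by funext ω; simp
    rw [h0, eLpNorm_one_eq_lintegral_enorm,
      ← ofReal_integral_norm_eq_lintegral_enorm (hTint n)]
    simp [Real.norm_eq_abs]
  rw [heq]
  have h2 := (ENNReal.continuous_ofReal.tendsto 0).comp hmain
  simpa [Function.comp_def] using h2
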